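/- Let A be a configuration on level n+1 and A_j its restriction to the subtree of the j-th child u_j of the root, and write g_j = P(σ_{u_j}=1 | states of the subtree of u_j at level n+1 equal A_j) (which equals f_n(1, A_j) by the recursive tree structure). Then f_{n+1}(1, A) = N1/(N1 + N2), where N1 = π1·∏_{j=1}^d [1 + (θ/π1)(g_j − π1)] and N2 = π2·∏_{j=1}^d [1 − (θ/π2)(g_j − π1)]. -/

import Mathlib

open Finset Filter

namespace AsymIsing

/-- Level-`k` vertices of the rooted `d`-ary tree: paths of length `k` from the root. -/
abbrev Vert (d k : ℕ) : Type := Fin k → Fin d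

/-- A spin configuration on levels `0, …, n` of the `d`-ary tree. -/
abbrev Conf (d n : ℕ) : Type := ∀ k : Fin (n + 1), Vert d k → Fin 2

/-- A spin configuration on level `n` only. -/
abbrev LConf (d n : ℕ) : Type := Vert d n → Fin 2

/-- The transition matrix of the asymmetric binary channel; the paper's state `1`
corresponds to the index `0` and the state `2` to the index `1`. -/
noncomputable def Mmat (θ Δ : ℝ) : Fin 2 → Fin 2 → ℝ := fun i j =>
  if i = 0 then (if j = 0 then (1 + θ - Δ) / 2 else (1 - θ + Δ) / 2)
  else (if j = 0 then (1 - θ - Δ) / 2 else (1 + θ + Δ) / 2)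

/-- The stationary distribution `π = (π₁, π₂)` of the channel. -/
noncomputable def pst (θ Δ : ℝ) : Fin 2 → ℝ := fun i =>
  if i = 0 then 1 / 2 - Δ / (2 * (1 - θ)) else 1 / 2 + Δ / (2 * (1 - θ))

/-- The root spin of a configuration. -/
def root {d n : ℕ} (σ : Conf d n) : Fin 2 := σ ⟨0, n.succ_pos⟩ (fun i => i.elim0)

/-- The restriction of a configuration to the last (`n`-th) level. -/
def top {d n : ℕ} (σ : Conf d n) : LConf d n := σ (Fin.last n)

/-- The probability of a full configuration on levels `0, …, n` under the broadcast
process: the root is drawn from `π` and spins propagate along edges via `M`. -/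
noncomputable def confProb (d : ℕ) (θ Δ : ℝ) (n : ℕ) (σ : Conf d n) : ℝ :=
  pst θ Δ (root σ) *
    ∏ k : Fin n, ∏ v : Vert d (k + 1),
      Mmat θ Δ (σ k.castSucc (v ∘ Fin.castSucc)) (σ k.succ v)

/-- `P(σ(n) = A)`: the marginal law of the level-`n` spins. -/
noncomputable def levelProb (d : ℕ) (θ Δ : ℝ) (n : ℕ) (A : LConf d n) : ℝ :=
  ∑ σ : Conf d n, if top σ = A then confProb d θ Δ n σ else 0

/-- `P(σ_ρ = i, σ(n) = A)`. -/
noncomputable def jointProb (d : ℕ) (θ Δ : ℝ) (n : ℕ) (i : Fin 2) (A : LConf d n) : ℝ :=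
  ∑ σ : Conf d n, if root σ = i ∧ top σ = A then confProb d θ Δ n σ else 0

/-- The posterior `f_n(i, A) = P(σ_ρ = i ∣ σ(n) = A)`. -/
noncomputable def post (d : ℕ) (θ Δ : ℝ) (n : ℕ) (i : Fin 2) (A : LConf d n) : ℝ :=
  jointProb d θ Δ n i A / levelProb d θ Δ n A

/-- The law of `σ^i(n)`, i.e. `P(σ(n) = A ∣ σ_ρ = i)`. -/
noncomputable def condLevel (d : ℕ) (θ Δ : ℝ) (n : ℕ) (i : Fin 2) (A : LConf d n) : ℝ :=
  jointProb d θ Δ n i A / pst θ Δ i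

/-- The total variation distance between `σ^1(n)` and `σ^2(n)`. -/
noncomputable def tvDist (d : ℕ) (θ Δ : ℝ) (n : ℕ) : ℝ :=
  (1 / 2) * ∑ A : LConf d n, |condLevel d θ Δ n 0 A - condLevel d θ Δ n 1 A|

/-- The reconstruction problem is solvable if `limsup_n d_TV(σ^1(n), σ^2(n)) > 0`. -/
def solvable (d : ℕ) (θ Δ : ℝ) : Prop :=
  0 < Filter.limsup (fun n => tvDist d θ Δ n) Filter.atTop

/-- Non-reconstruction: `limsup_n d_TV(σ^1(n), σ^2(n)) = 0`. -/
def nonReconstruction (d : ℕ) (θ Δ : ℝ) : Prop :=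
  Filter.limsup (fun n => tvDist d θ Δ n) Filter.atTop = 0

/-- Expectation of a function of the level-`n` configuration, conditioned on `σ_ρ = 1`. -/
noncomputable def expect1 (d : ℕ) (θ Δ : ℝ) (n : ℕ) (g : LConf d n → ℝ) : ℝ :=
  ∑ A : LConf d n, condLevel d θ Δ n 0 A * g A

/-- `x_n = E f_n(1, σ^1(n)) − π₁`. -/
noncomputable def xseq (d : ℕ) (θ Δ : ℝ) (n : ℕ) : ℝ :=
  expect1 d θ Δ n (fun A => post d θ Δ n 0 A) - pst θ Δ 0

/-- `z_n = E (f_n(1, σ^1(n)) − π₁)²`. -/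
noncomputable def zseq (d : ℕ) (θ Δ : ℝ) (n : ℕ) : ℝ :=
  expect1 d θ Δ n (fun A => (post d θ Δ n 0 A - pst θ Δ 0) ^ 2)

/-- The restriction of a level-`(n+1)` configuration to the subtree of the `j`-th
child of the root (paths starting with `j`). -/
def restrictChild {d n : ℕ} (j : Fin d) (A : LConf d (n + 1)) : LConf d n :=
  fun w => A (Fin.cons j w)

/-- `Y_j = f_n(1, σ_j(n+1))`, as a function of the level-`(n+1)` configuration. -/
noncomputable def Yfun (d : ℕ) (θ Δ : ℝ) (n : ℕ) (j : Fin d) (A : LConf d (n + 1)) : ℝ :=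
  post d θ Δ n 0 (restrictChild j A)

/-- `Z₁ = ∏_j (1 + (θ/π₁)(Y_j − π₁))`, as a function of the level-`(n+1)` configuration. -/
noncomputable def Z1fun (d : ℕ) (θ Δ : ℝ) (n : ℕ) (A : LConf d (n + 1)) : ℝ :=
  ∏ j : Fin d, (1 + (θ / pst θ Δ 0) * (Yfun d θ Δ n j A - pst θ Δ 0))

/-- `Z₂ = ∏_j (1 − (θ/π₂)(Y_j − π₁))`, as a function of the level-`(n+1)` configuration. -/
noncomputable def Z2fun (d : ℕ) (θ Δ : ℝ) (n : ℕ) (A : LConf d (n + 1)) : ℝ :=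
  ∏ j : Fin d, (1 - (θ / pst θ Δ 1) * (Yfun d θ Δ n j A - pst θ Δ 0))

section Aux

variable {d n : ℕ}

/-- Glue a root spin and `d` subtree configurations into a configuration on `n+1` levels. -/
def glue (i : Fin 2) (τ : Fin d → Conf d n) : Conf d (n + 1) :=
  fun k => Fin.cases (motive := fun k : Fin (n + 2) => Vert d k → Fin 2)
    (fun _ => i)
    (fun (k : Fin (n + 1)) (v : Fin ((k : ℕ) + 1) → Fin d) => τ (v 0) k (Fin.tail v)) k

lemma glue_succ (i : Fin 2) (τ : Fin d → Conf d n) (k : Fin (n + 1)) (v : Vert d ((k : ℕ) + 1)) :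
    glue i τ k.succ v = τ (v 0) k (Fin.tail v) := by
  exact congrFun (Fin.cases_succ (motive := fun k : Fin (n + 2) => Vert d k → Fin 2) (i := k)) v

lemma root_glue (i : Fin 2) (τ : Fin d → Conf d n) : root (glue i τ) = i := rfl

lemma apply_zero_eq_root (x : Conf d n) (v : Vert d (0 : ℕ)) : x 0 v = root x := by
  have hv : v = (fun i => i.elim0) := funext fun i => i.elim0
  rw [hv]; rfl

/-- The subtree configuration below the `j`-th child of the root. -/
def childConf (σ : Conf d (n + 1)) (j : Fin d) : Conf d n :=
  fun k w => σ k.succ (Fin.cons j w)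

def confEquiv : Conf d (n + 1) ≃ Fin 2 × (Fin d → Conf d n) where
  toFun σ := (root σ, fun j => childConf σ j)
  invFun p := glue p.1 p.2
  left_inv σ := by
    funext k v
    rcases k with ⟨kv, hk⟩
    cases kv with
    | zero =>
      show root σ = σ ⟨0, hk⟩ v
      have hv : v = (fun i => i.elim0) := funext fun i => i.elim0
      rw [root, hv]
    | succ m =>
      have hm : m < n + 1 := by omega
      show glue (root σ) (fun j => childConf σ j) (⟨m, hm⟩ : Fin (n + 1)).succ v
          = σ ⟨m + 1, hk⟩ v
      rw [glue_succ]
      show σ (⟨m, hm⟩ : Fin (n + 1)).succ (Fin.cons (v 0) (Fin.tail v)) = _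
      rw [Fin.cons_self_tail]
      rfl
  right_inv p := by
    obtain ⟨i, τ⟩ := p
    refine Prod.ext rfl ?_
    funext j k w
    show glue i τ k.succ (Fin.cons j w) = τ j k w
    rw [glue_succ]
    simp

lemma confProb_glue (θ Δ : ℝ) (hp : ∀ c, pst θ Δ c ≠ 0) (i : Fin 2) (τ : Fin d → Conf d n) :
    confProb d θ Δ (n + 1) (glue i τ) =
      pst θ Δ i * ∏ j : Fin d,
        (Mmat θ Δ i (root (τ j)) / pst θ Δ (root (τ j)) * confProb d θ Δ n (τ j)) := by
  have key : (∏ k : Fin (n + 1), ∏ v : Vert d ((k : ℕ) + 1),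
      Mmat θ Δ (glue i τ k.castSucc (v ∘ Fin.castSucc)) (glue i τ k.succ v))
      = ∏ j : Fin d, (Mmat θ Δ i (root (τ j)) *
          ∏ k : Fin n, ∏ w : Vert d ((k : ℕ) + 1),
            Mmat θ Δ (τ j k.castSucc (w ∘ Fin.castSucc)) (τ j k.succ w)) := by
    rw [Fin.prod_univ_succ, Finset.prod_mul_distrib]
    congr 1
    · refine Fintype.prod_equiv (Equiv.funUnique (Fin 1) (Fin d)) _ _ fun v => ?_
      have h1 : glue i τ (0 : Fin (n + 1)).castSucc (v ∘ Fin.castSucc) = i := rfl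
      have h2 : glue i τ (0 : Fin (n + 1)).succ v = root (τ (v 0)) := by
        refine (glue_succ i τ 0 v).trans ?_
        exact apply_zero_eq_root _ _
      exact congrArg₂ (Mmat θ Δ) h1 h2
    · rw [← Finset.prod_comm]
      refine Finset.prod_congr rfl fun k _ => ?_
      refine Eq.trans (Fintype.prod_equiv
        (Fin.consEquiv (fun _ : Fin ((k : ℕ) + 2) => Fin d)).symm _
        (fun p : Fin d × (Fin ((k : ℕ) + 1) → Fin d) =>
          Mmat θ Δ (τ p.1 k.castSucc (p.2 ∘ Fin.castSucc)) (τ p.1 k.succ p.2))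
        fun v => ?_) (Fintype.prod_prod_type _)
      have htail : Fin.tail (v ∘ Fin.castSucc) = Fin.tail v ∘ Fin.castSucc := by
        funext l
        show v (Fin.castSucc l.succ) = v (Fin.castSucc l).succ
        rw [Fin.succ_castSucc]
      have h1 : glue i τ k.succ.castSucc (v ∘ Fin.castSucc)
          = τ (v 0) k.castSucc (Fin.tail v ∘ Fin.castSucc) := by
        have h := glue_succ i τ k.castSucc (v ∘ Fin.castSucc)
        rw [htail] at h
        have h0 : (v ∘ Fin.castSucc) 0 = v 0 := by simp
        rw [h0] at h
        exact h
      have h2 : glue i τ k.succ.succ v = τ (v 0) k.succ (Fin.tail v) :=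
        glue_succ i τ k.succ v
      rw [h1, h2]
      simp [Fin.consEquiv]
  unfold confProb
  rw [root_glue, key]
  congr 1
  refine Finset.prod_congr rfl fun j _ => ?_
  rw [← mul_assoc, div_mul_cancel₀ _ (hp _)]

lemma top_glue_iff (i : Fin 2) (τ : Fin d → Conf d n) (A : LConf d (n + 1)) :
    top (glue i τ) = A ↔ ∀ j, top (τ j) = restrictChild j A := by
  have hkey : ∀ (j : Fin d) (w : Vert d n), top (glue i τ) (Fin.cons j w) = top (τ j) w := by
    intro j w
    show glue i τ (Fin.last n).succ (Fin.cons j w) = _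
    rw [glue_succ]
    simp [top]
  constructor
  · intro h j
    funext w
    have hc := congrFun h (Fin.cons j w)
    rw [hkey] at hc
    exact hc
  · intro h
    funext v
    have hv : Fin.cons (v 0) (Fin.tail v) = v := Fin.cons_self_tail v
    have hc := hkey (v 0) (Fin.tail v)
    rw [hv] at hc
    rw [hc, h (v 0)]
    exact congrArg A hv

lemma jointProb_succ (θ Δ : ℝ) (hp : ∀ c, pst θ Δ c ≠ 0) (i : Fin 2) (A : LConf d (n + 1)) :
    jointProb d θ Δ (n + 1) i A =
      pst θ Δ i * ∏ j : Fin d, ∑ c : Fin 2,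
        Mmat θ Δ i c / pst θ Δ c * jointProb d θ Δ n c (restrictChild j A) := by
  have step1 : jointProb d θ Δ (n + 1) i A
      = ∑ p : Fin 2 × (Fin d → Conf d n),
          if p.1 = i ∧ (∀ j, top (p.2 j) = restrictChild j A)
            then confProb d θ Δ (n + 1) (glue p.1 p.2) else 0 := by
    unfold jointProb
    refine (Fintype.sum_equiv (confEquiv (d := d) (n := n)).symm _ _ fun p => ?_).symm
    show _ = (if root (glue p.1 p.2) = i ∧ top (glue p.1 p.2) = A
        then confProb d θ Δ (n + 1) (glue p.1 p.2) else 0)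
    rw [root_glue]
    exact if_congr (and_congr Iff.rfl (top_glue_iff p.1 p.2 A).symm) rfl rfl
  have hterm : ∀ τ : Fin d → Conf d n,
      (if i = i ∧ (∀ j, top (τ j) = restrictChild j A)
        then confProb d θ Δ (n + 1) (glue i τ) else 0)
      = pst θ Δ i * ∏ j : Fin d,
          (if top (τ j) = restrictChild j A
            then Mmat θ Δ i (root (τ j)) / pst θ Δ (root (τ j)) * confProb d θ Δ n (τ j)
            else 0) := by
    intro τ
    by_cases hQ : ∀ j, top (τ j) = restrictChild j A
    · rw [if_pos ⟨rfl, hQ⟩, confProb_glue θ Δ hp]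
      congr 1
      exact Finset.prod_congr rfl fun j _ => (if_pos (hQ j)).symm
    · rw [if_neg (fun hc => hQ hc.2)]
      obtain ⟨j0, hj0⟩ := not_forall.1 hQ
      have hz : (∏ j : Fin d,
          (if top (τ j) = restrictChild j A
            then Mmat θ Δ i (root (τ j)) / pst θ Δ (root (τ j)) * confProb d θ Δ n (τ j)
            else 0)) = 0 :=
        Finset.prod_eq_zero (Finset.mem_univ j0) (if_neg hj0)
      rw [hz, mul_zero]
  have hSj : ∀ j : Fin d,
      (∑ c : Fin 2, Mmat θ Δ i c / pst θ Δ c * jointProb d θ Δ n c (restrictChild j A))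
      = ∑ σ' : Conf d n,
          (if top σ' = restrictChild j A
            then Mmat θ Δ i (root σ') / pst θ Δ (root σ') * confProb d θ Δ n σ'
            else 0) := by
    intro j
    unfold jointProb
    calc (∑ c : Fin 2, Mmat θ Δ i c / pst θ Δ c *
            ∑ σ' : Conf d n, (if root σ' = c ∧ top σ' = restrictChild j A
              then confProb d θ Δ n σ' else 0))
        = ∑ c : Fin 2, ∑ σ' : Conf d n,
            (if root σ' = c ∧ top σ' = restrictChild j A
              then Mmat θ Δ i c / pst θ Δ c * confProb d θ Δ n σ' else 0) := by
          refine Finset.sum_congr rfl fun c _ => ?_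
          rw [Finset.mul_sum]
          exact Finset.sum_congr rfl fun σ' _ => by rw [mul_ite, mul_zero]
      _ = ∑ σ' : Conf d n, ∑ c : Fin 2,
            (if root σ' = c ∧ top σ' = restrictChild j A
              then Mmat θ Δ i c / pst θ Δ c * confProb d θ Δ n σ' else 0) :=
          Finset.sum_comm
      _ = ∑ σ' : Conf d n,
            (if top σ' = restrictChild j A
              then Mmat θ Δ i (root σ') / pst θ Δ (root σ') * confProb d θ Δ n σ'
              else 0) := by
          refine Finset.sum_congr rfl fun σ' _ => ?_
          by_cases h : top σ' = restrictChild j A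
          · rw [Fintype.sum_eq_single (root σ')
              (fun c hc => if_neg fun hx => hc hx.1.symm), if_pos ⟨rfl, h⟩, if_pos h]
          · rw [if_neg h]
            exact Finset.sum_eq_zero fun c _ => if_neg fun hx => h hx.2
  rw [step1, Fintype.sum_prod_type,
    Fintype.sum_eq_single i (fun b hb => Finset.sum_eq_zero fun τ _ =>
      if_neg fun hc => hb hc.1),
    Finset.sum_congr rfl fun τ _ => hterm τ, ← Finset.mul_sum]
  congr 1
  rw [Finset.prod_congr rfl fun j (_ : j ∈ Finset.univ) => hSj j, Finset.prod_univ_sum,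
    Fintype.piFinset_univ]

lemma confProb_pos (θ Δ : ℝ) (hM : ∀ i j, 0 < Mmat θ Δ i j) (hpst : ∀ c, 0 < pst θ Δ c)
    (σ : Conf d n) : 0 < confProb d θ Δ n σ :=
  mul_pos (hpst _) (Finset.prod_pos fun _ _ => Finset.prod_pos fun _ _ => hM _ _)

/-- Some configuration with a given top level. -/
def base (A : LConf d n) : Conf d n := fun k v =>
  if h : (k : ℕ) = n then A (fun m => v ⟨(m : ℕ), by rw [h]; exact m.isLt⟩) else 0

lemma top_base (A : LConf d n) : top (base A) = A := by
  funext v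
  refine Eq.trans (dif_pos rfl) ?_
  congr 1

lemma levelProb_pos (θ Δ : ℝ) (hM : ∀ i j, 0 < Mmat θ Δ i j) (hpst : ∀ c, 0 < pst θ Δ c)
    (A : LConf d n) : 0 < levelProb d θ Δ n A := by
  unfold levelProb
  refine Finset.sum_pos' (fun σ _ => ?_) ⟨base A, Finset.mem_univ _, ?_⟩
  · by_cases h : top σ = A
    · rw [if_pos h]; exact (confProb_pos θ Δ hM hpst σ).le
    · rw [if_neg h]
  · rw [if_pos (top_base A)]
    exact confProb_pos θ Δ hM hpst _

lemma level_eq (θ Δ : ℝ) (A : LConf d n) :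
    levelProb d θ Δ n A = jointProb d θ Δ n 0 A + jointProb d θ Δ n 1 A := by
  unfold levelProb jointProb
  rw [← Finset.sum_add_distrib]
  refine Finset.sum_congr rfl fun σ _ => ?_
  by_cases h : top σ = A
  · by_cases hr : root σ = 0
    · simp [h, hr]
    · have hr1 : root σ = 1 := by
        have h2 := (root σ).isLt
        have h0 : (root σ : ℕ) ≠ 0 := fun hh => hr (Fin.ext hh)
        exact Fin.ext (by omega)
      simp [h, hr1]
  · simp [h]

lemma pst_pos {θ Δ : ℝ} (hθ1 : |θ| < 1) (hM : ∀ i j, 0 < Mmat θ Δ i j) :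
    ∀ c, 0 < pst θ Δ c := by
  have hθ : θ < 1 := lt_of_abs_lt hθ1
  have h10 := hM 1 0
  have h01 := hM 0 1
  simp only [Mmat] at h10 h01
  norm_num at h10 h01
  have h2 : (0 : ℝ) < 2 * (1 - θ) := by linarith
  intro c
  fin_cases c
  · show (0 : ℝ) < 1 / 2 - Δ / (2 * (1 - θ))
    rw [sub_pos, div_lt_iff₀ h2]
    linarith
  · show (0 : ℝ) < 1 / 2 + Δ / (2 * (1 - θ))
    have : -(1 / 2 : ℝ) < Δ / (2 * (1 - θ)) := by
      rw [lt_div_iff₀ h2]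
      linarith
    linarith

lemma chanA (θ π1 π2 g L : ℝ) (hs : π1 + π2 = 1) (h1 : π1 ≠ 0) (h2 : π2 ≠ 0) :
    (π1 + θ * π2) / π1 * (g * L) + (π2 - θ * π2) / π2 * (L - g * L)
      = L * (1 + θ / π1 * (g - π1)) := by
  have h : π2 = 1 - π1 := by linarith
  subst h
  field_simp
  ring

lemma chanB (θ π1 π2 g L : ℝ) (hs : π1 + π2 = 1) (h1 : π1 ≠ 0) (h2 : π2 ≠ 0) :
    (π1 - θ * π1) / π1 * (g * L) + (π2 + θ * π1) / π2 * (L - g * L)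
      = L * (1 - θ / π2 * (g - π1)) := by
  have h : π2 = 1 - π1 := by linarith
  subst h
  field_simp
  ring

lemma pst_sum (θ Δ : ℝ) : pst θ Δ 0 + pst θ Δ 1 = 1 := by
  simp only [pst]
  norm_num

lemma M00_eq (θ Δ : ℝ) (hθ : (1 : ℝ) - θ ≠ 0) :
    Mmat θ Δ 0 0 = pst θ Δ 0 + θ * pst θ Δ 1 := by
  simp only [Mmat, pst]
  norm_num
  field_simp
  ring

lemma M01_eq (θ Δ : ℝ) (hθ : (1 : ℝ) - θ ≠ 0) :
    Mmat θ Δ 0 1 = pst θ Δ 1 - θ * pst θ Δ 1 := by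
  simp only [Mmat, pst]
  norm_num
  field_simp

lemma M10_eq (θ Δ : ℝ) (hθ : (1 : ℝ) - θ ≠ 0) :
    Mmat θ Δ 1 0 = pst θ Δ 0 - θ * pst θ Δ 0 := by
  simp only [Mmat, pst]
  norm_num
  field_simp

lemma M11_eq (θ Δ : ℝ) (hθ : (1 : ℝ) - θ ≠ 0) :
    Mmat θ Δ 1 1 = pst θ Δ 1 + θ * pst θ Δ 0 := by
  simp only [Mmat, pst]
  norm_num
  field_simp
  ring

end Aux

/-- The value of `Δ` making `π = (π₁, π₂)` the stationary distribution of the channel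
with second eigenvalue `θ`, namely `Δ = (1 − θ)(π₂ − π₁)`. -/
noncomputable def Dlt (θ π1 π2 : ℝ) : ℝ := (1 - θ) * (π2 - π1)

/-- The Gaussian-approximation function
`f(s) = E[π₁ e^{sμ₁+√s W₁} / (π₁ e^{sμ₁+√s W₁} + π₂ e^{sμ₂+√s W₂})] − π₁`,
where `μ₁ = 1/(2π₁)`, `μ₂ = −(1+π₂)/(2π₂²)`, `W₁ ∼ N(0, 1/π₁)` (realized as `w/√π₁`
for `w` standard Gaussian) and `W₂ = −(π₁/π₂)·W₁`. -/
noncomputable def gfun (π1 π2 : ℝ) (s : ℝ) : ℝ :=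
  (∫ w : ℝ,
      (π1 * Real.exp (s * (1 / (2 * π1)) + Real.sqrt s * (w / Real.sqrt π1))) /
        (π1 * Real.exp (s * (1 / (2 * π1)) + Real.sqrt s * (w / Real.sqrt π1)) +
          π2 * Real.exp (s * (-(1 + π2) / (2 * π2 ^ 2)) +
            Real.sqrt s * (-(π1 / π2) * (w / Real.sqrt π1))))
    ∂(ProbabilityTheory.gaussianReal 0 1)) - π1

/-- Recursive formula for the posterior: for any level-`(n+1)`
configuration `A`, with `g_j = f_n(1, A_j)` the posterior of the `j`-th child from its
subtree, `f_{n+1}(1, A) = N₁/(N₁ + N₂)` where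
`N₁ = π₁·∏_j (1 + (θ/π₁)(g_j − π₁))` and `N₂ = π₂·∏_j (1 − (θ/π₂)(g_j − π₁))`. -/
theorem post_recursion (d : ℕ) (hd : 2 ≤ d) (θ Δ : ℝ) (hθ0 : θ ≠ 0) (hθ1 : |θ| < 1)
    (hθΔ : |θ| + |Δ| ≤ 1) (hM : ∀ i j, 0 < Mmat θ Δ i j)
    (hord : pst θ Δ 1 ≤ pst θ Δ 0) :
    ∀ (n : ℕ) (A : LConf d (n + 1)),
      post d θ Δ (n + 1) 0 A =
        (pst θ Δ 0 * ∏ j : Fin d,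
            (1 + (θ / pst θ Δ 0) * (post d θ Δ n 0 (restrictChild j A) - pst θ Δ 0))) /
          (pst θ Δ 0 * ∏ j : Fin d,
              (1 + (θ / pst θ Δ 0) * (post d θ Δ n 0 (restrictChild j A) - pst θ Δ 0)) +
            pst θ Δ 1 * ∏ j : Fin d,
              (1 - (θ / pst θ Δ 1) * (post d θ Δ n 0 (restrictChild j A) - pst θ Δ 0))) := by
  intro n A
  have hθlt : θ < 1 := lt_of_abs_lt hθ1
  have h1θ : (1 : ℝ) - θ ≠ 0 := ne_of_gt (by linarith)
  have hpstpos : ∀ c, 0 < pst θ Δ c := pst_pos hθ1 hM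
  have hp : ∀ c, pst θ Δ c ≠ 0 := fun c => (hpstpos c).ne'
  have hL : ∀ j : Fin d, 0 < levelProb d θ Δ n (restrictChild j A) :=
    fun j => levelProb_pos θ Δ hM hpstpos _
  have hsum0 : ∀ j : Fin d,
      (∑ c : Fin 2, Mmat θ Δ 0 c / pst θ Δ c * jointProb d θ Δ n c (restrictChild j A))
      = levelProb d θ Δ n (restrictChild j A) *
          (1 + θ / pst θ Δ 0 * (post d θ Δ n 0 (restrictChild j A) - pst θ Δ 0)) := by
    intro j
    have hgL : post d θ Δ n 0 (restrictChild j A) * levelProb d θ Δ n (restrictChild j A)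
        = jointProb d θ Δ n 0 (restrictChild j A) := div_mul_cancel₀ _ (hL j).ne'
    have hq : jointProb d θ Δ n 1 (restrictChild j A)
        = levelProb d θ Δ n (restrictChild j A)
          - post d θ Δ n 0 (restrictChild j A) * levelProb d θ Δ n (restrictChild j A) := by
      have h := level_eq θ Δ (restrictChild j A)
      linarith
    rw [Fin.sum_univ_two, hq, ← hgL, M00_eq θ Δ h1θ, M01_eq θ Δ h1θ]
    exact chanA θ _ _ _ _ (pst_sum θ Δ) (hp 0) (hp 1)
  have hsum1 : ∀ j : Fin d,
      (∑ c : Fin 2, Mmat θ Δ 1 c / pst θ Δ c * jointProb d θ Δ n c (restrictChild j A))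
      = levelProb d θ Δ n (restrictChild j A) *
          (1 - θ / pst θ Δ 1 * (post d θ Δ n 0 (restrictChild j A) - pst θ Δ 0)) := by
    intro j
    have hgL : post d θ Δ n 0 (restrictChild j A) * levelProb d θ Δ n (restrictChild j A)
        = jointProb d θ Δ n 0 (restrictChild j A) := div_mul_cancel₀ _ (hL j).ne'
    have hq : jointProb d θ Δ n 1 (restrictChild j A)
        = levelProb d θ Δ n (restrictChild j A)
          - post d θ Δ n 0 (restrictChild j A) * levelProb d θ Δ n (restrictChild j A) := by
      have h := level_eq θ Δ (restrictChild j A)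
      linarith
    rw [Fin.sum_univ_two, hq, ← hgL, M10_eq θ Δ h1θ, M11_eq θ Δ h1θ]
    exact chanB θ _ _ _ _ (pst_sum θ Δ) (hp 0) (hp 1)
  have e0 : jointProb d θ Δ (n + 1) 0 A
      = (∏ j : Fin d, levelProb d θ Δ n (restrictChild j A)) *
        (pst θ Δ 0 * ∏ j : Fin d,
          (1 + θ / pst θ Δ 0 * (post d θ Δ n 0 (restrictChild j A) - pst θ Δ 0))) := by
    rw [jointProb_succ θ Δ hp 0 A, Finset.prod_congr rfl fun j _ => hsum0 j,
      Finset.prod_mul_distrib]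
    ring
  have e1 : jointProb d θ Δ (n + 1) 1 A
      = (∏ j : Fin d, levelProb d θ Δ n (restrictChild j A)) *
        (pst θ Δ 1 * ∏ j : Fin d,
          (1 - θ / pst θ Δ 1 * (post d θ Δ n 0 (restrictChild j A) - pst θ Δ 0))) := by
    rw [jointProb_succ θ Δ hp 1 A, Finset.prod_congr rfl fun j _ => hsum1 j,
      Finset.prod_mul_distrib]
    ring
  have hprod : (∏ j : Fin d, levelProb d θ Δ n (restrictChild j A)) ≠ 0 :=
    (Finset.prod_pos fun j _ => hL j).ne'
  show jointProb d θ Δ (n + 1) 0 A / levelProb d θ Δ (n + 1) A = _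
  rw [level_eq θ Δ A, e0, e1, ← mul_add, mul_div_mul_left _ _ hprod]

end AsymIsing
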